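/- Let D := {(v₁,v₂,v₃,w₁,w₂,w₃) ∈ ℝ⁶ : v₁+v₂+v₃ = 1, w₁+w₂+w₃ = 1, v₁w₁ − v₂w₂ + v₃w₃ = 0, and v₁,v₂,v₃,w₁,w₂,w₃ ≥ 0}. Then the subset of D consisting of points for which at least one of the six coordinates v₁,v₂,v₃,w₁,w₂,w₃ equals 0 is homeomorphic to a 2-dimensional sphere. -/

import Mathlib

/-- The realization in `ℝ⁶` of the totally nonnegative part of the complete flag variety
of `SL₃(ℝ)`: points `(v₁, v₂, v₃, w₁, w₂, w₃)` with `v₁ + v₂ + v₃ = 1`,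
`w₁ + w₂ + w₃ = 1`, `v₁w₁ - v₂w₂ + v₃w₃ = 0`, and all coordinates nonnegative. -/
def tnnFlag : Set (EuclideanSpace ℝ (Fin 6)) :=
  {x | x 0 + x 1 + x 2 = 1 ∧ x 3 + x 4 + x 5 = 1 ∧
    x 0 * x 3 - x 1 * x 4 + x 2 * x 5 = 0 ∧ ∀ i, 0 ≤ x i}

open Metric Set Bornology

section Aux

/-- The map realizing the boundary of the tnn flag variety as the boundary of a
tetrahedron in `ℝ³`. -/
noncomputable def Hmap (x : EuclideanSpace ℝ (Fin 6)) : EuclideanSpace ℝ (Fin 3) :=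
  WithLp.toLp 2 ![x 5 - x 0, x 3 - x 2, (1 - x 0) * (1 - x 5) - (1 - x 2) * (1 - x 3)]

lemma Hmap_zero (x : EuclideanSpace ℝ (Fin 6)) : Hmap x 0 = x 5 - x 0 := rfl
lemma Hmap_one (x : EuclideanSpace ℝ (Fin 6)) : Hmap x 1 = x 3 - x 2 := rfl
lemma Hmap_two (x : EuclideanSpace ℝ (Fin 6)) :
    Hmap x 2 = (1 - x 0) * (1 - x 5) - (1 - x 2) * (1 - x 3) := rfl

lemma Hmap_continuous : Continuous Hmap := by
  have h : Continuous fun x : EuclideanSpace ℝ (Fin 6) =>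
      (![x 5 - x 0, x 3 - x 2, (1 - x 0) * (1 - x 5) - (1 - x 2) * (1 - x 3)] : Fin 3 → ℝ) := by
    apply continuous_pi
    intro i
    fin_cases i <;> simp <;> fun_prop
  exact (PiLp.continuousLinearEquiv 2 ℝ (fun _ : Fin 3 => ℝ)).symm.continuous.comp h

/-- A tetrahedron in `ℝ³` (with vertices `(0,±1,1)`, `(±1,0,-1)`). -/
def Kset : Set (EuclideanSpace ℝ (Fin 3)) :=
  {y | y 2 + 2 * y 0 ≤ 1 ∧ y 2 - 2 * y 0 ≤ 1 ∧ -1 ≤ y 2 + 2 * y 1 ∧ -1 ≤ y 2 - 2 * y 1}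

lemma Kset_convex : Convex ℝ Kset := by
  intro a ha b hb s t hs ht hst
  obtain ⟨h1, h2, h3, h4⟩ := ha; obtain ⟨g1, g2, g3, g4⟩ := hb
  have e : ∀ i, (s • a + t • b : EuclideanSpace ℝ (Fin 3)) i = s * a i + t * b i := fun i => rfl
  refine ⟨?_, ?_, ?_, ?_⟩
  · rw [e 2, e 0]; nlinarith
  · rw [e 2, e 0]; nlinarith
  · rw [e 2, e 1]; nlinarith
  · rw [e 2, e 1]; nlinarith

lemma Kset_closed : IsClosed Kset := by
  have : Kset = {y : EuclideanSpace ℝ (Fin 3) | y 2 + 2 * y 0 ≤ 1} ∩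
      ({y | y 2 - 2 * y 0 ≤ 1} ∩ ({y | -1 ≤ y 2 + 2 * y 1} ∩ {y | -1 ≤ y 2 - 2 * y 1})) := by
    ext y; simp only [Kset, mem_setOf_eq, mem_inter_iff]; try tauto
  rw [this]
  exact (isClosed_le (by fun_prop) (by fun_prop)).inter
    ((isClosed_le (by fun_prop) (by fun_prop)).inter
      ((isClosed_le (by fun_prop) (by fun_prop)).inter
        (isClosed_le (by fun_prop) (by fun_prop))))

lemma abs_coord_le_norm (y : EuclideanSpace ℝ (Fin 3)) (i : Fin 3) : |y i| ≤ ‖y‖ := by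
  have h1 : |y i| = √(‖y i‖ ^ 2) := by rw [Real.sqrt_sq_eq_abs]; simp
  rw [h1, EuclideanSpace.norm_eq]
  exact Real.sqrt_le_sqrt <|
    Finset.single_le_sum (f := fun j => ‖y j‖ ^ 2) (fun j _ => by positivity) (Finset.mem_univ i)

lemma Kset_interior_nonempty : (interior Kset).Nonempty := by
  have hsub : ball (0 : EuclideanSpace ℝ (Fin 3)) (1/4) ⊆ Kset := by
    intro y hy
    rw [mem_ball, dist_zero_right] at hy
    have h0 := abs_le.mp ((abs_coord_le_norm y 0).trans hy.le)
    have h1 := abs_le.mp ((abs_coord_le_norm y 1).trans hy.le)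
    have h2 := abs_le.mp ((abs_coord_le_norm y 2).trans hy.le)
    exact ⟨by linarith [h0.1, h0.2, h2.1, h2.2], by linarith [h0.1, h0.2, h2.1, h2.2],
      by linarith [h1.1, h1.2, h2.1, h2.2], by linarith [h1.1, h1.2, h2.1, h2.2]⟩
  exact ⟨0, interior_maximal hsub isOpen_ball (mem_ball_self (by norm_num))⟩

lemma Kset_bounded : IsBounded Kset := by
  apply (isBounded_closedBall (x := (0 : EuclideanSpace ℝ (Fin 3))) (r := 2)).subset
  intro y hy
  obtain ⟨h1, h2, h3, h4⟩ := hy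
  have hz1 : y 2 ≤ 1 := by linarith
  have hz2 : -1 ≤ y 2 := by linarith
  have hx1 : |y 0| ≤ 1 := abs_le.mpr ⟨by linarith, by linarith⟩
  have hy1 : |y 1| ≤ 1 := abs_le.mpr ⟨by linarith, by linarith⟩
  have hz : |y 2| ≤ 1 := abs_le.mpr ⟨hz2, hz1⟩
  rw [mem_closedBall, dist_zero_right, EuclideanSpace.norm_eq]
  have hsum : ∑ i : Fin 3, ‖y i‖ ^ 2 ≤ 4 := by
    rw [Fin.sum_univ_three]
    have e0 : ‖y 0‖ ^ 2 = |y 0| ^ 2 := by simp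
    have e1 : ‖y 1‖ ^ 2 = |y 1| ^ 2 := by simp
    have e2 : ‖y 2‖ ^ 2 = |y 2| ^ 2 := by simp
    rw [e0, e1, e2]
    nlinarith [abs_nonneg (y 0), abs_nonneg (y 1), abs_nonneg (y 2)]
  calc √(∑ i : Fin 3, ‖y i‖ ^ 2) ≤ √4 := Real.sqrt_le_sqrt hsum
    _ = 2 := by rw [show (4 : ℝ) = 2 ^ 2 by norm_num, Real.sqrt_sq (by norm_num)]

/-- The key identity: on `tnnFlag`, `(1-v₁)(1-w₃) + (1-v₃)(1-w₁) = 1`. -/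
lemma key_identity {x : EuclideanSpace ℝ (Fin 6)} (hx : x ∈ tnnFlag) :
    (1 - x 0) * (1 - x 5) + (1 - x 2) * (1 - x 3) = 1 := by
  obtain ⟨h1, h2, h3, -⟩ := hx
  have e1 : x 1 = 1 - x 0 - x 2 := by linarith
  have e4 : x 4 = 1 - x 3 - x 5 := by linarith
  rw [e1, e4] at h3
  linear_combination -h3

lemma tnn_le_one {x : EuclideanSpace ℝ (Fin 6)} (hx : x ∈ tnnFlag) :
    x 0 ≤ 1 ∧ x 2 ≤ 1 ∧ x 3 ≤ 1 ∧ x 5 ≤ 1 := by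
  obtain ⟨h1, h2, -, h4⟩ := hx
  exact ⟨by linarith [h4 1, h4 2], by linarith [h4 0, h4 1],
    by linarith [h4 4, h4 5], by linarith [h4 3, h4 4]⟩

/-- Two nonnegative reals are determined by their difference and product. -/
lemma diff_prod_inj {a b a' b' : ℝ} (ha : 0 ≤ a) (hb : 0 ≤ b) (ha' : 0 ≤ a') (hb' : 0 ≤ b')
    (h1 : a - b = a' - b') (h2 : a * b = a' * b') : a = a' ∧ b = b' := by
  have key : (a - a') * (a' + b) = 0 := by linear_combination h2 + a' * h1
  have key2 : (a - a') * (a + b') = 0 := by linear_combination h2 + a * h1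
  have haa : a = a' := by
    rcases mul_eq_zero.mp key with h | h
    · linarith
    · have h5 : a' = 0 := by linarith
      have h6 : b = 0 := by linarith
      rcases mul_eq_zero.mp key2 with h' | h' <;> linarith
  exact ⟨haa, by linarith⟩

/-- Construction of two elements of `[0,1]` from their difference and product. -/
lemma exists_diff_prod {d m : ℝ} (hm : 0 ≤ m) (hp : m + d ≤ 1) (hq : m - d ≤ 1) :
    ∃ a b : ℝ, 0 ≤ a ∧ a ≤ 1 ∧ 0 ≤ b ∧ b ≤ 1 ∧ a - b = d ∧ a * b = m := by
  set S := Real.sqrt (d ^ 2 + 4 * m) with hS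
  have hS0 : 0 ≤ S := Real.sqrt_nonneg _
  have hSsq : S ^ 2 = d ^ 2 + 4 * m := Real.sq_sqrt (by nlinarith)
  have habs : |d| ≤ S := by
    have h := Real.sqrt_le_sqrt (show d ^ 2 ≤ d ^ 2 + 4 * m by nlinarith)
    rwa [Real.sqrt_sq_eq_abs] at h
  have h1 := abs_le.mp habs
  have hd1 : d ≤ 1 := by linarith
  have hd2 : -1 ≤ d := by linarith
  have hub : S ≤ 2 - d := by
    have h' : Real.sqrt (d ^ 2 + 4 * m) ≤ Real.sqrt ((2 - d) ^ 2) :=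
      Real.sqrt_le_sqrt (by nlinarith)
    rwa [Real.sqrt_sq (by linarith)] at h'
  have hub2 : S ≤ 2 + d := by
    have h' : Real.sqrt (d ^ 2 + 4 * m) ≤ Real.sqrt ((2 + d) ^ 2) :=
      Real.sqrt_le_sqrt (by nlinarith)
    rwa [Real.sqrt_sq (by linarith)] at h'
  exact ⟨(d + S) / 2, (S - d) / 2, by linarith, by linarith, by linarith, by linarith,
    by ring, by linear_combination hSsq / 4⟩

lemma ext3 {u v : EuclideanSpace ℝ (Fin 3)} (h0 : u 0 = v 0) (h1 : u 1 = v 1)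
    (h2 : u 2 = v 2) : u = v := by
  apply PiLp.ext; intro i; fin_cases i <;> assumption

lemma ext6 {u v : EuclideanSpace ℝ (Fin 6)} (h0 : u 0 = v 0) (h1 : u 1 = v 1) (h2 : u 2 = v 2)
    (h3 : u 3 = v 3) (h4 : u 4 = v 4) (h5 : u 5 = v 5) : u = v := by
  apply PiLp.ext; intro i; fin_cases i <;> assumption

/-- `Hmap` is injective on the whole tnn flag variety. -/
lemma Hmap_injOn : InjOn Hmap tnnFlag := by
  intro x hx x' hx' h
  have h0 : x 5 - x 0 = x' 5 - x' 0 := congrArg (fun v : EuclideanSpace ℝ (Fin 3) => v 0) h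
  have h1 : x 3 - x 2 = x' 3 - x' 2 := congrArg (fun v : EuclideanSpace ℝ (Fin 3) => v 1) h
  have h2 : (1 - x 0) * (1 - x 5) - (1 - x 2) * (1 - x 3)
      = (1 - x' 0) * (1 - x' 5) - (1 - x' 2) * (1 - x' 3) := congrArg (fun v : EuclideanSpace ℝ (Fin 3) => v 2) h
  have hk := key_identity hx
  have hk' := key_identity hx'
  obtain ⟨b0, b2, b3, b5⟩ := tnn_le_one hx
  obtain ⟨b0', b2', b3', b5'⟩ := tnn_le_one hx'
  have hpq : (1 - x 0) * (1 - x 5) = (1 - x' 0) * (1 - x' 5) := by linarith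
  have hrs : (1 - x 2) * (1 - x 3) = (1 - x' 2) * (1 - x' 3) := by linarith
  obtain ⟨e0, e5⟩ := diff_prod_inj (a := 1 - x 0) (b := 1 - x 5) (a' := 1 - x' 0)
    (b' := 1 - x' 5) (by linarith) (by linarith) (by linarith) (by linarith) (by linarith) hpq
  obtain ⟨e2, e3⟩ := diff_prod_inj (a := 1 - x 2) (b := 1 - x 3) (a' := 1 - x' 2)
    (b' := 1 - x' 3) (by linarith) (by linarith) (by linarith) (by linarith) (by linarith) hrs
  obtain ⟨s1, s2, -, -⟩ := hx
  obtain ⟨s1', s2', -, -⟩ := hx'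
  exact ext6 (by linarith) (by linarith) (by linarith) (by linarith) (by linarith) (by linarith)

/-- `Hmap` maps the flag variety into the tetrahedron. -/
lemma Hmap_mem_Kset {x : EuclideanSpace ℝ (Fin 6)} (hx : x ∈ tnnFlag) : Hmap x ∈ Kset := by
  have hk := key_identity hx
  obtain ⟨b0, b2, b3, b5⟩ := tnn_le_one hx
  obtain ⟨-, -, -, h4⟩ := hx
  rw [Kset, mem_setOf_eq, Hmap_zero, Hmap_one, Hmap_two]
  refine ⟨?_, ?_, ?_, ?_⟩
  · nlinarith [mul_nonneg (h4 0) (show (0:ℝ) ≤ 2 - x 5 by linarith)]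
  · nlinarith [mul_nonneg (h4 5) (show (0:ℝ) ≤ 2 - x 0 by linarith)]
  · nlinarith [mul_nonneg (h4 3) (show (0:ℝ) ≤ 2 - x 2 by linarith)]
  · nlinarith [mul_nonneg (h4 2) (show (0:ℝ) ≤ 2 - x 3 by linarith)]

/-- A boundary point maps onto one of the four faces of the tetrahedron. -/
lemma Hmap_face {x : EuclideanSpace ℝ (Fin 6)} (hx : x ∈ tnnFlag) (hi : ∃ i, x i = 0) :
    Hmap x 2 + 2 * Hmap x 0 = 1 ∨ Hmap x 2 - 2 * Hmap x 0 = 1 ∨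
      Hmap x 2 + 2 * Hmap x 1 = -1 ∨ Hmap x 2 - 2 * Hmap x 1 = -1 := by
  have hk := key_identity hx
  have hcases : x 0 = 0 ∨ x 2 = 0 ∨ x 3 = 0 ∨ x 5 = 0 := by
    obtain ⟨h1, h2, h3, h4⟩ := hx
    obtain ⟨i, hi⟩ := hi
    fin_cases i
    · exact Or.inl hi
    · have hi' : x 1 = 0 := hi
      rw [hi', zero_mul] at h3
      have hz : x 0 * x 3 = 0 := by
        have m1 := mul_nonneg (h4 0) (h4 3)
        have m2 := mul_nonneg (h4 2) (h4 5)
        linarith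
      rcases mul_eq_zero.mp hz with h | h
      · exact Or.inl h
      · exact Or.inr (Or.inr (Or.inl h))
    · exact Or.inr (Or.inl hi)
    · exact Or.inr (Or.inr (Or.inl hi))
    · have hi' : x 4 = 0 := hi
      rw [hi', mul_zero] at h3
      have hz : x 0 * x 3 = 0 := by
        have m1 := mul_nonneg (h4 0) (h4 3)
        have m2 := mul_nonneg (h4 2) (h4 5)
        linarith
      rcases mul_eq_zero.mp hz with h | h
      · exact Or.inl h
      · exact Or.inr (Or.inr (Or.inl h))
    · exact Or.inr (Or.inr (Or.inr hi))
  rw [Hmap_zero, Hmap_one, Hmap_two]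
  rcases hcases with h | h | h | h
  · exact Or.inl (by linear_combination -hk + 2 * (x 5 - 2) * h)
  · exact Or.inr (Or.inr (Or.inr (by linear_combination hk + 2 * (2 - x 3) * h)))
  · exact Or.inr (Or.inr (Or.inl (by linear_combination hk + 2 * (2 - x 2) * h)))
  · exact Or.inr (Or.inl (by linear_combination -hk + 2 * (x 0 - 2) * h))

/-- Points on faces are not interior points of the tetrahedron. -/
lemma not_mem_interior {y : EuclideanSpace ℝ (Fin 3)}
    (h : y 2 + 2 * y 0 = 1 ∨ y 2 - 2 * y 0 = 1 ∨ y 2 + 2 * y 1 = -1 ∨ y 2 - 2 * y 1 = -1) :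
    y ∉ interior Kset := by
  intro hy
  rw [mem_interior_iff_mem_nhds, Metric.mem_nhds_iff] at hy
  obtain ⟨ε, hε, hball⟩ := hy
  set pt : ℝ → EuclideanSpace ℝ (Fin 3) :=
    fun c => y + c • EuclideanSpace.single (2 : Fin 3) (1 : ℝ) with hpt
  have hmem : ∀ c : ℝ, |c| < ε → pt c ∈ Kset := by
    intro c hc
    apply hball
    rw [mem_ball, hpt, dist_eq_norm, add_sub_cancel_left, norm_smul,
      EuclideanSpace.norm_single, norm_one, mul_one]
    exact hc
  have happ0 : ∀ c : ℝ, pt c 0 = y 0 := by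
    intro c; simp [hpt, EuclideanSpace.single_apply]
  have happ1 : ∀ c : ℝ, pt c 1 = y 1 := by
    intro c; simp [hpt, EuclideanSpace.single_apply]
  have happ2 : ∀ c : ℝ, pt c 2 = y 2 + c := by
    intro c; simp [hpt, EuclideanSpace.single_apply]; try ring
  rcases h with h | h | h | h
  · have hz := hmem (ε / 2) (by rw [abs_of_pos (by linarith)]; linarith)
    have h' := hz.1
    rw [happ0, happ2] at h'; linarith
  · have hz := hmem (ε / 2) (by rw [abs_of_pos (by linarith)]; linarith)
    have h' := hz.2.1
    rw [happ0, happ2] at h'; linarith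
  · have hz := hmem (-(ε / 2)) (by rw [abs_of_neg (by linarith)]; linarith)
    have h' := hz.2.2.1
    rw [happ1, happ2] at h'; linarith
  · have hz := hmem (-(ε / 2)) (by rw [abs_of_neg (by linarith)]; linarith)
    have h' := hz.2.2.2
    rw [happ1, happ2] at h'; linarith

lemma frontier_Kset_subset {y : EuclideanSpace ℝ (Fin 3)} (hy : y ∈ frontier Kset) :
    y ∈ Kset ∧ (y 2 + 2 * y 0 = 1 ∨ y 2 - 2 * y 0 = 1 ∨
      y 2 + 2 * y 1 = -1 ∨ y 2 - 2 * y 1 = -1) := by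
  rw [Kset_closed.frontier_eq] at hy
  obtain ⟨hyK, hyI⟩ := hy
  refine ⟨hyK, ?_⟩
  by_contra hc
  push_neg at hc
  obtain ⟨n1, n2, n3, n4⟩ := hc
  apply hyI
  have hopen : IsOpen {y : EuclideanSpace ℝ (Fin 3) | y 2 + 2 * y 0 < 1 ∧ y 2 - 2 * y 0 < 1 ∧
      -1 < y 2 + 2 * y 1 ∧ -1 < y 2 - 2 * y 1} := by
    have : {y : EuclideanSpace ℝ (Fin 3) | y 2 + 2 * y 0 < 1 ∧ y 2 - 2 * y 0 < 1 ∧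
        -1 < y 2 + 2 * y 1 ∧ -1 < y 2 - 2 * y 1} =
        {y : EuclideanSpace ℝ (Fin 3) | y 2 + 2 * y 0 < 1} ∩
        ({y | y 2 - 2 * y 0 < 1} ∩ ({y | -1 < y 2 + 2 * y 1} ∩ {y | -1 < y 2 - 2 * y 1})) := by
      ext z; simp only [mem_setOf_eq, mem_inter_iff]; try tauto
    rw [this]
    exact (isOpen_lt (by fun_prop) (by fun_prop)).inter
      ((isOpen_lt (by fun_prop) (by fun_prop)).inter
        ((isOpen_lt (by fun_prop) (by fun_prop)).inter (isOpen_lt (by fun_prop) (by fun_prop))))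
  refine interior_maximal ?_ hopen ⟨lt_of_le_of_ne hyK.1 n1, lt_of_le_of_ne hyK.2.1 n2,
    lt_of_le_of_ne hyK.2.2.1 (Ne.symm n3), lt_of_le_of_ne hyK.2.2.2 (Ne.symm n4)⟩
  intro z hz
  exact ⟨hz.1.le, hz.2.1.le, hz.2.2.1.le, hz.2.2.2.le⟩

/-- `Hmap` surjects the boundary of the flag variety onto the frontier of the tetrahedron. -/
lemma Hmap_surj {y : EuclideanSpace ℝ (Fin 3)} (hy : y ∈ frontier Kset) :
    ∃ x, (x ∈ tnnFlag ∧ ∃ i, x i = 0) ∧ Hmap x = y := by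
  obtain ⟨⟨k1, k2, k3, k4⟩, hcase⟩ := frontier_Kset_subset hy
  rcases hcase with e | e | e | e
  · -- face v₁ = 0
    obtain ⟨a, b, ha0, ha1, hb0, hb1, hab, hm⟩ :=
      exists_diff_prod (m := y 0) (d := y 1) (by linarith) (by linarith) (by linarith)
    refine ⟨WithLp.toLp 2 ![0, a, 1 - a, 1 - b, b - a * b, a * b], ⟨⟨?_, ?_, ?_, ?_⟩, ⟨0, rfl⟩⟩, ?_⟩
    · show (0 : ℝ) + a + (1 - a) = 1; ring
    · show (1 - b) + (b - a * b) + a * b = 1; ring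
    · show (0 : ℝ) * (1 - b) - a * (b - a * b) + (1 - a) * (a * b) = 0; ring
    · intro i; fin_cases i
      · exact le_refl (0:ℝ)
      · exact ha0
      · show (0:ℝ) ≤ 1 - a; linarith
      · show (0:ℝ) ≤ 1 - b; linarith
      · show (0:ℝ) ≤ b - a * b; nlinarith
      · show (0:ℝ) ≤ a * b; positivity
    · refine ext3 ?_ ?_ ?_
      · show a * b - 0 = y 0; linarith
      · show (1 - b) - (1 - a) = y 1; linarith
      · show (1 - 0) * (1 - a * b) - (1 - (1 - a)) * (1 - (1 - b)) = y 2; nlinarith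
  · -- face w₃ = 0
    obtain ⟨a, b, ha0, ha1, hb0, hb1, hab, hm⟩ :=
      exists_diff_prod (m := -y 0) (d := y 1) (by linarith) (by linarith) (by linarith)
    refine ⟨WithLp.toLp 2 ![a * b, a - a * b, 1 - a, 1 - b, b, 0], ⟨⟨?_, ?_, ?_, ?_⟩, ⟨5, rfl⟩⟩, ?_⟩
    · show a * b + (a - a * b) + (1 - a) = 1; ring
    · show (1 - b) + b + (0:ℝ) = 1; ring
    · show a * b * (1 - b) - (a - a * b) * b + (1 - a) * 0 = 0; ring
    · intro i; fin_cases i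
      · show (0:ℝ) ≤ a * b; positivity
      · show (0:ℝ) ≤ a - a * b; nlinarith
      · show (0:ℝ) ≤ 1 - a; linarith
      · show (0:ℝ) ≤ 1 - b; linarith
      · exact hb0
      · exact le_refl (0:ℝ)
    · refine ext3 ?_ ?_ ?_
      · show 0 - a * b = y 0; linarith
      · show (1 - b) - (1 - a) = y 1; linarith
      · show (1 - a * b) * (1 - 0) - (1 - (1 - a)) * (1 - (1 - b)) = y 2; nlinarith
  · -- face w₁ = 0
    obtain ⟨a, b, ha0, ha1, hb0, hb1, hab, hm⟩ :=
      exists_diff_prod (m := -y 1) (d := y 0) (by linarith) (by linarith) (by linarith)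
    refine ⟨WithLp.toLp 2 ![1 - a, a - a * b, a * b, 0, b, 1 - b], ⟨⟨?_, ?_, ?_, ?_⟩, ⟨3, rfl⟩⟩, ?_⟩
    · show (1 - a) + (a - a * b) + a * b = 1; ring
    · show (0:ℝ) + b + (1 - b) = 1; ring
    · show (1 - a) * 0 - (a - a * b) * b + a * b * (1 - b) = 0; ring
    · intro i; fin_cases i
      · show (0:ℝ) ≤ 1 - a; linarith
      · show (0:ℝ) ≤ a - a * b; nlinarith
      · show (0:ℝ) ≤ a * b; positivity
      · exact le_refl (0:ℝ)
      · exact hb0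
      · show (0:ℝ) ≤ 1 - b; linarith
    · refine ext3 ?_ ?_ ?_
      · show (1 - b) - (1 - a) = y 0; linarith
      · show 0 - a * b = y 1; linarith
      · show (1 - (1 - a)) * (1 - (1 - b)) - (1 - a * b) * (1 - 0) = y 2; nlinarith
  · -- face v₃ = 0
    obtain ⟨a, b, ha0, ha1, hb0, hb1, hab, hm⟩ :=
      exists_diff_prod (m := y 1) (d := y 0) (by linarith) (by linarith) (by linarith)
    refine ⟨WithLp.toLp 2 ![1 - a, a, 0, a * b, b - a * b, 1 - b], ⟨⟨?_, ?_, ?_, ?_⟩, ⟨2, rfl⟩⟩, ?_⟩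
    · show (1 - a) + a + (0:ℝ) = 1; ring
    · show a * b + (b - a * b) + (1 - b) = 1; ring
    · show (1 - a) * (a * b) - a * (b - a * b) + 0 * (1 - b) = 0; ring
    · intro i; fin_cases i
      · show (0:ℝ) ≤ 1 - a; linarith
      · exact ha0
      · exact le_refl (0:ℝ)
      · show (0:ℝ) ≤ a * b; positivity
      · show (0:ℝ) ≤ b - a * b; nlinarith
      · show (0:ℝ) ≤ 1 - b; linarith
    · refine ext3 ?_ ?_ ?_
      · show (1 - b) - (1 - a) = y 0; linarith
      · show a * b - 0 = y 1; linarith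
      · show (1 - (1 - a)) * (1 - (1 - b)) - (1 - 0) * (1 - a * b) = y 2; nlinarith

lemma boundary_compact : IsCompact {x ∈ tnnFlag | ∃ i, x i = 0} := by
  apply Metric.isCompact_of_isClosed_isBounded
  · have heq : {x ∈ tnnFlag | ∃ i, x i = 0} =
        ({x : EuclideanSpace ℝ (Fin 6) | x 0 + x 1 + x 2 = 1} ∩
          ({x | x 3 + x 4 + x 5 = 1} ∩
            ({x | x 0 * x 3 - x 1 * x 4 + x 2 * x 5 = 0} ∩
              ((⋂ i : Fin 6, {x | 0 ≤ x i}) ∩ (⋃ i : Fin 6, {x | x i = 0}))))) := by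
      ext x
      simp only [tnnFlag, mem_setOf_eq, mem_sep_iff, mem_inter_iff, mem_iInter, mem_iUnion]
      tauto
    rw [heq]
    refine (isClosed_eq (by fun_prop) (by fun_prop)).inter
      ((isClosed_eq (by fun_prop) (by fun_prop)).inter
        ((isClosed_eq (by fun_prop) (by fun_prop)).inter
          ((isClosed_iInter fun i => isClosed_le (by fun_prop) (by fun_prop)).inter
            (isClosed_iUnion_of_finite fun i => isClosed_eq (by fun_prop) (by fun_prop)))))
  · apply (isBounded_closedBall (x := (0 : EuclideanSpace ℝ (Fin 6))) (r := 3)).subset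
    rintro x ⟨hx, -⟩
    obtain ⟨h1, h2, -, h4⟩ := hx
    rw [mem_closedBall, dist_zero_right, EuclideanSpace.norm_eq]
    have hb : ∀ i : Fin 6, ‖x i‖ ^ 2 ≤ 1 := by
      intro i
      have h01 : 0 ≤ x i := h4 i
      have hle : x i ≤ 1 := by
        fin_cases i
        · show x 0 ≤ 1; linarith [h4 1, h4 2]
        · show x 1 ≤ 1; linarith [h4 0, h4 2]
        · show x 2 ≤ 1; linarith [h4 0, h4 1]
        · show x 3 ≤ 1; linarith [h4 4, h4 5]
        · show x 4 ≤ 1; linarith [h4 3, h4 5]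
        · show x 5 ≤ 1; linarith [h4 3, h4 4]
      rw [Real.norm_eq_abs, abs_of_nonneg h01]
      nlinarith
    have hsum : ∑ i : Fin 6, ‖x i‖ ^ 2 ≤ 9 := by
      calc ∑ i : Fin 6, ‖x i‖ ^ 2 ≤ ∑ _i : Fin 6, (1 : ℝ) :=
            Finset.sum_le_sum (fun i _ => hb i)
        _ = 6 := by simp
        _ ≤ 9 := by norm_num
    calc √(∑ i : Fin 6, ‖x i‖ ^ 2) ≤ √9 := Real.sqrt_le_sqrt hsum
      _ = 3 := by rw [show (9 : ℝ) = 3 ^ 2 by norm_num, Real.sqrt_sq (by norm_num)]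

end Aux

/-- The subset of the totally nonnegative part of the complete flag variety of `SL₃(ℝ)`
consisting of points with at least one vanishing coordinate is homeomorphic to a
2-dimensional sphere. -/
theorem tnnFlag_boundary_homeomorphic_sphere :
    Nonempty (↥{x ∈ tnnFlag | ∃ i, x i = 0} ≃ₜ
      Metric.sphere (0 : EuclideanSpace ℝ (Fin 3)) 1) := by
  obtain ⟨e, -, -, he⟩ := exists_homeomorph_image_interior_closure_frontier_eq_unitBall
    Kset_convex Kset_interior_nonempty Kset_bounded
  haveI : CompactSpace ↥{x ∈ tnnFlag | ∃ i, x i = 0} :=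
    isCompact_iff_compactSpace.mp boundary_compact
  -- the bijection between the boundary and the frontier of the tetrahedron
  have hmem : ∀ x : ↥{x ∈ tnnFlag | ∃ i, x i = 0}, Hmap x.1 ∈ frontier Kset := by
    rintro ⟨x, hx1, hx2⟩
    rw [Kset_closed.frontier_eq]
    exact ⟨Hmap_mem_Kset hx1, not_mem_interior (Hmap_face hx1 hx2)⟩
  let f : ↥{x ∈ tnnFlag | ∃ i, x i = 0} → ↥(frontier Kset) := fun x => ⟨Hmap x.1, hmem x⟩
  have hbij : Function.Bijective f := by
    constructor
    · rintro ⟨x, hx⟩ ⟨x', hx'⟩ h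
      have : Hmap x = Hmap x' := congrArg Subtype.val h
      exact Subtype.ext (Hmap_injOn hx.1 hx'.1 this)
    · rintro ⟨y, hy⟩
      obtain ⟨x, hx, hHx⟩ := Hmap_surj hy
      exact ⟨⟨x, hx⟩, Subtype.ext hHx⟩
  have hcont : Continuous f :=
    Continuous.subtype_mk (Hmap_continuous.comp continuous_subtype_val) _
  let equiv : ↥{x ∈ tnnFlag | ∃ i, x i = 0} ≃ ↥(frontier Kset) := Equiv.ofBijective f hbij
  have hcont' : Continuous equiv := hcont
  let homeo1 := hcont'.homeoOfEquivCompactToT2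
  exact ⟨homeo1.trans ((e.image (frontier Kset)).trans (Homeomorph.setCongr he))⟩
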